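/- Correctness of the generating-function TTSV1 algorithm: for every vector b : V → ℝ and every vertex v ∈ V, [B b^{N−1}]_v = ∑_{e ∈ E, v ∈ e} (w(e)/|β(e)|) · (N−1)! · c_{N−1}(e, v), where c_{N−1}(e, v) is the coefficient of X^{N−1} in the formal power series exp(b(v)·X) · ∏_{u ∈ e∖{v}} (exp(b(u)·X) − 1) over ℝ. -/

import Mathlib

open Finset PowerSeries

section helpers
variable {V : Type*} [Fintype V] [DecidableEq V]

lemma prod_rescale_exp (b : V → ℝ) (T : Finset V) :
    ∏ u ∈ T, PowerSeries.rescale (b u) (PowerSeries.exp ℝ)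
      = PowerSeries.rescale (∑ u ∈ T, b u) (PowerSeries.exp ℝ) := by
  classical
  induction T using Finset.induction_on with
  | empty => simp [PowerSeries.rescale_zero, PowerSeries.constantCoeff_exp]
  | insert _ _ h ih =>
      rw [Finset.prod_insert h, ih, PowerSeries.exp_mul_exp_eq_exp_add, Finset.sum_insert h]

lemma coeff_rescale_exp (c : ℝ) (m : ℕ) :
    PowerSeries.coeff (R := ℝ) m (PowerSeries.rescale c (PowerSeries.exp ℝ))
      = c ^ m * ((m.factorial : ℝ))⁻¹ := by
  rw [PowerSeries.coeff_rescale, PowerSeries.coeff_exp]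
  norm_num [eq_ratCast]

lemma pow_sum_fun (b : V → ℝ) (W : Finset V) (m : ℕ) :
    (∑ u ∈ W, b u) ^ m
      = ∑ j : Fin m → V, if ∀ k, j k ∈ W then ∏ k, b (j k) else 0 := by
  have h1 : (∑ u ∈ W, b u) = ∑ u, (if u ∈ W then b u else 0) := by
    rw [Finset.sum_ite_mem, Finset.univ_inter]
  rw [h1, Fintype.sum_pow]
  refine Finset.sum_congr rfl fun j _ => ?_
  by_cases h : ∀ k, j k ∈ W
  · rw [if_pos h]; exact Finset.prod_congr rfl fun k _ => if_pos (h k)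
  · rw [if_neg h]
    push_neg at h
    obtain ⟨k, hk⟩ := h
    exact Finset.prod_eq_zero (Finset.mem_univ k) (if_neg hk)

lemma sum_sign_interval (S D : Finset V) (hD : D ⊆ S) :
    ∑ T ∈ S.powerset, (if D ⊆ T then ((-1:ℝ)) ^ (S \ T).card else 0)
      = if D = S then 1 else 0 := by
  rw [← Finset.sum_filter]
  have h1 : ∑ T ∈ S.powerset.filter (fun T => D ⊆ T), ((-1:ℝ)) ^ (S \ T).card
      = ∑ U ∈ (S \ D).powerset, ((-1:ℝ)) ^ U.card := by
    refine Finset.sum_nbij' (fun T => S \ T) (fun U => S \ U) ?_ ?_ ?_ ?_ ?_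
    · intro T hT
      simp only [Finset.mem_filter, Finset.mem_powerset] at hT ⊢
      exact Finset.sdiff_subset_sdiff Finset.Subset.rfl hT.2
    · intro U hU
      simp only [Finset.mem_filter, Finset.mem_powerset] at hU ⊢
      refine ⟨Finset.sdiff_subset, fun x hx => ?_⟩
      simp only [Finset.mem_sdiff]
      exact ⟨hD hx, fun hxU => (Finset.mem_sdiff.mp (hU hxU)).2 hx⟩
    · intro T hT
      simp only [Finset.mem_filter, Finset.mem_powerset] at hT
      exact Finset.sdiff_sdiff_eq_self hT.1
    · intro U hU
      simp only [Finset.mem_powerset] at hU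
      exact Finset.sdiff_sdiff_eq_self (hU.trans Finset.sdiff_subset)
    · intro T _; rfl
  rw [h1]
  have h2 : (∑ U ∈ (S \ D).powerset, ((-1:ℝ)) ^ U.card)
      = ((∑ U ∈ (S \ D).powerset, ((-1:ℤ)) ^ U.card : ℤ) : ℝ) := by push_cast; rfl
  rw [h2, Finset.sum_powerset_neg_one_pow_card]
  by_cases h : D = S
  · rw [if_pos h, if_pos (by simp [h]), Int.cast_one]
  · have hne : ¬ S \ D = ∅ := by
      intro hh
      apply h
      refine Finset.Subset.antisymm hD (fun x hx => ?_)
      by_contra hxD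
      exact absurd (Finset.mem_sdiff.mpr ⟨hx, hxD⟩) (by simp [hh])
    rw [if_neg h, if_neg hne, Int.cast_zero]

lemma per_j (b : V → ℝ) (v : V) {m : ℕ} (S : Finset V) (hvS : v ∉ S) (j : Fin m → V) :
    ∑ T ∈ S.powerset,
        (-1:ℝ) ^ (S \ T).card * (if ∀ k, j k ∈ insert v T then ∏ k, b (j k) else 0)
      = if insert v (Finset.image j Finset.univ) = insert v S then ∏ k, b (j k) else 0 := by
  set D := (Finset.image j Finset.univ).erase v with hD
  have hcond : ∀ T : Finset V, (∀ k, j k ∈ insert v T) ↔ D ⊆ T := by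
    intro T
    rw [hD, ← Finset.subset_insert_iff]
    constructor
    · intro h x hx
      obtain ⟨k, -, rfl⟩ := Finset.mem_image.mp hx
      exact h k
    · intro h k
      exact h (Finset.mem_image.mpr ⟨k, Finset.mem_univ k, rfl⟩)
  have hterm : ∀ T : Finset V,
      (-1:ℝ) ^ (S \ T).card * (if ∀ k, j k ∈ insert v T then ∏ k, b (j k) else 0)
        = (if D ⊆ T then (-1:ℝ) ^ (S \ T).card else 0) * ∏ k, b (j k) := by
    intro T
    rw [if_congr (hcond T) rfl rfl]
    by_cases h : D ⊆ T
    · rw [if_pos h, if_pos h]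
    · rw [if_neg h, if_neg h, mul_zero, zero_mul]
  rw [Finset.sum_congr rfl (fun T _ => hterm T), ← Finset.sum_mul]
  by_cases hDS : D ⊆ S
  · rw [sum_sign_interval S D hDS]
    have hiff : D = S ↔ insert v (Finset.image j Finset.univ) = insert v S := by
      constructor
      · intro h
        have h2 : insert v (Finset.image j Finset.univ) = insert v D := by
          ext x; simp [hD, Finset.mem_erase]; tauto
        rw [h2, h]
      · intro h
        rw [hD, ← Finset.erase_insert_eq_erase, h, Finset.erase_insert hvS]
    by_cases h : D = S
    · rw [if_pos h, if_pos (hiff.mp h), one_mul]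
    · rw [if_neg h, if_neg (fun hh => h (hiff.mpr hh)), zero_mul]
  · have h0 : ∑ T ∈ S.powerset, (if D ⊆ T then (-1:ℝ) ^ (S \ T).card else 0) = 0 := by
      refine Finset.sum_eq_zero fun T hT => ?_
      rw [if_neg (fun hh => hDS (hh.trans (Finset.mem_powerset.mp hT)))]
    rw [h0, zero_mul]
    rw [if_neg]
    intro hh
    apply hDS
    rw [hD]
    calc (Finset.image j Finset.univ).erase v ⊆ (insert v (Finset.image j Finset.univ)).erase v :=
          Finset.erase_subset_erase v (Finset.subset_insert _ _)
      _ = (insert v S).erase v := by rw [hh]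
      _ = S := Finset.erase_insert hvS

lemma key (b : V → ℝ) (v : V) (m : ℕ) (e : Finset V) (hv : v ∈ e) :
    ∑ j : Fin m → V,
        (if insert v (Finset.image j Finset.univ) = e then ∏ k, b (j k) else 0)
      = (m.factorial : ℝ) * PowerSeries.coeff (R := ℝ) m
          (PowerSeries.rescale (b v) (PowerSeries.exp ℝ) *
            ∏ u ∈ e.erase v, (PowerSeries.rescale (b u) (PowerSeries.exp ℝ) - 1)) := by
  set S := e.erase v with hS
  have hvS : v ∉ S := Finset.notMem_erase v e
  have hinsert : insert v S = e := Finset.insert_erase hv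
  have hexpand : PowerSeries.rescale (b v) (PowerSeries.exp ℝ) *
        ∏ u ∈ S, (PowerSeries.rescale (b u) (PowerSeries.exp ℝ) - 1)
      = ∑ T ∈ S.powerset, PowerSeries.C (R := ℝ) ((-1:ℝ) ^ (S \ T).card) *
          PowerSeries.rescale (b v + ∑ u ∈ T, b u) (PowerSeries.exp ℝ) := by
    have h1 : ∏ u ∈ S, (PowerSeries.rescale (b u) (PowerSeries.exp ℝ) - 1)
        = ∑ T ∈ S.powerset, (∏ u ∈ T, PowerSeries.rescale (b u) (PowerSeries.exp ℝ)) *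
            ∏ _u ∈ S \ T, (-1 : PowerSeries ℝ) := by
      rw [← Finset.prod_add]
      exact Finset.prod_congr rfl fun u _ => (sub_eq_add_neg _ _)
    rw [h1, Finset.mul_sum]
    refine Finset.sum_congr rfl fun T _ => ?_
    rw [prod_rescale_exp, Finset.prod_const]
    have h2 : ((-1 : PowerSeries ℝ)) ^ (S \ T).card
        = PowerSeries.C (R := ℝ) ((-1:ℝ) ^ (S \ T).card) := by
      rw [map_pow, map_neg, map_one]
    rw [h2, mul_comm (PowerSeries.rescale (∑ u ∈ T, b u) (PowerSeries.exp ℝ)) _,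
      ← mul_assoc, mul_comm (PowerSeries.rescale (b v) (PowerSeries.exp ℝ)) _, mul_assoc,
      PowerSeries.exp_mul_exp_eq_exp_add]
  rw [← hinsert] at *
  rw [hexpand, map_sum]
  have hcoeff : ∀ T ∈ S.powerset,
      PowerSeries.coeff (R := ℝ) m (PowerSeries.C (R := ℝ) ((-1:ℝ) ^ (S \ T).card) *
        PowerSeries.rescale (b v + ∑ u ∈ T, b u) (PowerSeries.exp ℝ))
      = (-1:ℝ) ^ (S \ T).card * ((b v + ∑ u ∈ T, b u) ^ m * ((m.factorial : ℝ))⁻¹) := by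
    intro T _
    rw [PowerSeries.coeff_C_mul, coeff_rescale_exp]
  rw [Finset.sum_congr rfl hcoeff, Finset.mul_sum]
  have hfac : (m.factorial : ℝ) ≠ 0 := Nat.cast_ne_zero.mpr m.factorial_ne_zero
  have hterm : ∀ T ∈ S.powerset,
      (m.factorial : ℝ) * ((-1:ℝ) ^ (S \ T).card * ((b v + ∑ u ∈ T, b u) ^ m *
        ((m.factorial : ℝ))⁻¹))
      = (-1:ℝ) ^ (S \ T).card * (b v + ∑ u ∈ T, b u) ^ m := by
    intro T _; field_simp
  rw [Finset.sum_congr rfl hterm]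
  have hpow : ∀ T ∈ S.powerset, (-1:ℝ) ^ (S \ T).card * (b v + ∑ u ∈ T, b u) ^ m
      = ∑ j : Fin m → V, (-1:ℝ) ^ (S \ T).card *
          (if ∀ k, j k ∈ insert v T then ∏ k, b (j k) else 0) := by
    intro T hT
    have hvT : v ∉ T := fun h => hvS (Finset.mem_powerset.mp hT h)
    rw [← Finset.sum_insert hvT, pow_sum_fun, Finset.mul_sum]
  rw [Finset.sum_congr rfl hpow, Finset.sum_comm]
  exact (Finset.sum_congr rfl fun j _ => per_j b v S hvS j).symm

end helpers

/-- The set of ordered blowups of a finite subset `e` of the vertex set `V`: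
all `N`-tuples of vertices whose set of entries is exactly `e`. -/
def blowups (V : Type*) [Fintype V] [DecidableEq V] (N : ℕ) (e : Finset V) :
    Finset (Fin N → V) :=
  Finset.univ.filter (fun i => ∀ v : V, v ∈ e ↔ ∃ k : Fin N, i k = v)

/-- The Banerjee blowup adjacency tensor of the hypergraph with edge set `E`
and weights `w`. -/
noncomputable def tensorB (V : Type*) [Fintype V] [DecidableEq V] (N : ℕ)
    (E : Finset (Finset V)) (w : Finset V → ℝ) (i : Fin N → V) : ℝ :=
  if Finset.image i Finset.univ ∈ E then
    w (Finset.image i Finset.univ) /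
      (blowups V N (Finset.image i Finset.univ)).card
  else 0

/-- The `N`-tuple `(v, j_1, …, j_{N-1})` obtained by prepending `v` to the
`(N-1)`-tuple `j`. -/
def extend (V : Type*) (N : ℕ) (v : V) (j : Fin (N - 1) → V) : Fin N → V :=
  fun k => if h : (k : ℕ) = 0 then v else j ⟨(k : ℕ) - 1, by have := k.2; omega⟩

/-- TTSV1: `[B b^{N−1}]_v = ∑_{(i_2,…,i_N) ∈ V^{N−1}} B(v, i_2, …, i_N)
⬝ ∏_{k=2}^N b(i_k)`. -/
noncomputable def ttsv1 (V : Type*) [Fintype V] [DecidableEq V] (N : ℕ)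
    (E : Finset (Finset V)) (w : Finset V → ℝ) (b : V → ℝ) (v : V) : ℝ :=
  ∑ j : Fin (N - 1) → V, tensorB V N E w (extend V N v j) * ∏ k, b (j k)

lemma image_extend {V : Type*} [Fintype V] [DecidableEq V] (N : ℕ) (hN : 1 ≤ N) (v : V)
    (j : Fin (N - 1) → V) :
    Finset.image (extend V N v j) Finset.univ = insert v (Finset.image j Finset.univ) := by
  ext u
  simp only [Finset.mem_image, Finset.mem_insert, Finset.mem_univ, true_and]
  constructor
  · rintro ⟨k, rfl⟩
    by_cases h : (k : ℕ) = 0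
    · left; simp [extend, h]
    · right
      exact ⟨⟨(k : ℕ) - 1, by have := k.2; omega⟩, by simp [extend, h]⟩
  · rintro (rfl | ⟨i, rfl⟩)
    · exact ⟨⟨0, by omega⟩, by simp [extend]⟩
    · refine ⟨⟨(i : ℕ) + 1, by have := i.2; omega⟩, ?_⟩
      have h : ¬ (((⟨(i : ℕ) + 1, by have := i.2; omega⟩ : Fin N) : ℕ) = 0) := by simp
      rw [extend, dif_neg h]
      exact congrArg j (Fin.ext (by simp))



/-- Correctness of the generating-function TTSV1 algorithm:
`[B b^{N−1}]_v = ∑_{e ∈ E, v ∈ e} (w(e)/|β(e)|) ⬝ (N−1)! ⬝ c_{N−1}(e, v)`,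
where `c_{N−1}(e, v)` is the coefficient of `X^{N−1}` in
`exp(b(v)·X) ⬝ ∏_{u ∈ e∖{v}} (exp(b(u)·X) − 1)`. -/
theorem ttsv1_generating_function (V : Type*) [Fintype V] [DecidableEq V]
    (N : ℕ) (hN : 2 ≤ N) (E : Finset (Finset V))
    (hE : ∀ e ∈ E, 2 ≤ e.card ∧ e.card ≤ N) (w : Finset V → ℝ)
    (b : V → ℝ) (v : V) :
    ttsv1 V N E w b v =
      ∑ e ∈ E.filter (fun e => v ∈ e),
        (w e / (blowups V N e).card) *
          (((N - 1).factorial : ℝ) *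
            PowerSeries.coeff (R := ℝ) (N - 1)
              (PowerSeries.rescale (b v) (PowerSeries.exp ℝ) *
                ∏ u ∈ e.erase v,
                  (PowerSeries.rescale (b u) (PowerSeries.exp ℝ) - 1))) := by
  classical
  have him : ∀ j : Fin (N - 1) → V,
      Finset.image (extend V N v j) Finset.univ = insert v (Finset.image j Finset.univ) :=
    fun j => image_extend N (by omega) v j
  have hRHS : ∀ e ∈ E.filter (fun e => v ∈ e),
      (w e / (blowups V N e).card) *
          (((N - 1).factorial : ℝ) *
            PowerSeries.coeff (R := ℝ) (N - 1)
              (PowerSeries.rescale (b v) (PowerSeries.exp ℝ) *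
                ∏ u ∈ e.erase v,
                  (PowerSeries.rescale (b u) (PowerSeries.exp ℝ) - 1)))
      = ∑ j : Fin (N - 1) → V,
          (if insert v (Finset.image j Finset.univ) = e then
            (w e / (blowups V N e).card) * ∏ k, b (j k) else 0) := by
    intro e he
    rw [← key b v (N - 1) e (Finset.mem_filter.mp he).2, Finset.mul_sum]
    refine Finset.sum_congr rfl fun j _ => ?_
    by_cases h : insert v (Finset.image j Finset.univ) = e
    · rw [if_pos h, if_pos h]
    · rw [if_neg h, if_neg h, mul_zero]
  rw [Finset.sum_congr rfl hRHS, Finset.sum_comm, ttsv1]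
  refine Finset.sum_congr rfl fun j _ => ?_
  rw [Finset.sum_ite_eq, tensorB, him j]
  by_cases h : insert v (Finset.image j Finset.univ) ∈ E
  · rw [if_pos h, if_pos (Finset.mem_filter.mpr ⟨h, Finset.mem_insert_self v _⟩)]
  · rw [if_neg h, if_neg (fun hh => h (Finset.mem_filter.mp hh).1), zero_mul]
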